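/- Let a ∈ (1/2)·ℤ² with a ≠ 0, let b, c ∈ ℤ² be linearly independent, and let α ∈ ℝ² satisfy ⟨b, α⟩ ∈ ℤ and ⟨c, α⟩ ∈ ℤ. Then for every λ ∈ (1/2)·ℤ the Euclidean distance from α to the line {x ∈ ℝ² : ⟨a, x⟩ = λ} is an integer multiple of 1/(2·|a|·|det(b, c)|). -/

import Mathlib

/-- The integer vector `m ∈ ℤ²` viewed as a point of the Euclidean plane. -/
noncomputable def vec (m : Fin 2 → ℤ) : EuclideanSpace ℝ (Fin 2) :=
  (WithLp.equiv 2 (Fin 2 → ℝ)).symm (fun i => (m i : ℝ))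

/-- A real vector viewed as a point of the Euclidean plane. -/
noncomputable def vecR (a : Fin 2 → ℝ) : EuclideanSpace ℝ (Fin 2) :=
  (WithLp.equiv 2 (Fin 2 → ℝ)).symm a

/-- The determinant of the 2×2 matrix formed by `b, c ∈ ℤ²`. -/
def det2 (b c : Fin 2 → ℤ) : ℤ := b 0 * c 1 - b 1 * c 0

/-- Distance to a hyperplane. -/
lemma infDist_hyperplane (v : EuclideanSpace ℝ (Fin 2)) (hv : v ≠ 0)
    (p : EuclideanSpace ℝ (Fin 2)) (c : ℝ) :
    Metric.infDist p {x : EuclideanSpace ℝ (Fin 2) | (inner ℝ v x : ℝ) = c} =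
      |(inner ℝ v p : ℝ) - c| / ‖v‖ := by
  have hvn : (0:ℝ) < ‖v‖ := norm_pos_iff.mpr hv
  set t : ℝ := ((inner ℝ v p : ℝ) - c) / ‖v‖^2 with ht
  set q := p - t • v with hq
  have hqmem : q ∈ {x : EuclideanSpace ℝ (Fin 2) | (inner ℝ v x : ℝ) = c} := by
    simp only [hq, Set.mem_setOf_eq, inner_sub_right, real_inner_smul_right,
      real_inner_self_eq_norm_sq, ht]
    field_simp
    ring
  have hdist : dist p q = |(inner ℝ v p : ℝ) - c| / ‖v‖ := by
    rw [dist_eq_norm, hq]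
    simp only [sub_sub_cancel, norm_smul, Real.norm_eq_abs, ht, abs_div, abs_pow, abs_norm]
    rw [sq, ← div_div, div_mul_cancel₀ _ (ne_of_gt hvn)]
  apply le_antisymm
  · rw [← hdist]; exact Metric.infDist_le_dist_of_mem hqmem
  · by_contra hcon
    push_neg at hcon
    obtain ⟨y, hy, hlt⟩ := (Metric.infDist_lt_iff ⟨q, hqmem⟩).mp hcon
    refine absurd hlt (not_lt.mpr ?_)
    rw [div_le_iff₀ hvn, dist_eq_norm]
    have h1 : (inner ℝ v p : ℝ) - c = inner ℝ v (p - y) := by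
      rw [inner_sub_right, hy]
    rw [h1]
    calc |(inner ℝ v (p - y) : ℝ)| ≤ ‖v‖ * ‖p - y‖ := abs_real_inner_le_norm v (p - y)
      _ = ‖p - y‖ * ‖v‖ := mul_comm _ _

/-- Let `a ∈ (1/2)·ℤ²` with `a ≠ 0`, let `b, c ∈ ℤ²` be linearly independent, and let
`α ∈ ℝ²` satisfy `⟨b, α⟩ ∈ ℤ` and `⟨c, α⟩ ∈ ℤ`. Then for every `λ ∈ (1/2)·ℤ` the Euclidean
distance from `α` to the line `{x : ⟨a, x⟩ = λ}` is an integer multiple of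
`1/(2·|a|·|det(b, c)|)`. -/
theorem distance_divisibility_half_integer
    (a : Fin 2 → ℝ) (ha_half : ∀ i, ∃ n : ℤ, a i = n / 2) (ha : a ≠ 0)
    (b c : Fin 2 → ℤ) (hbc : det2 b c ≠ 0)
    (α : EuclideanSpace ℝ (Fin 2))
    (hb : ∃ n : ℤ, (inner ℝ (vec b) α : ℝ) = n)
    (hc : ∃ n : ℤ, (inner ℝ (vec c) α : ℝ) = n) :
    ∀ lam : ℝ, (∃ n : ℤ, lam = n / 2) → ∃ k : ℤ,
      Metric.infDist α {x : EuclideanSpace ℝ (Fin 2) | (inner ℝ (vecR a) x : ℝ) = lam} =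
        k * (2 * ‖vecR a‖ * |(det2 b c : ℝ)|)⁻¹ := by
  intro lam hlam
  obtain ⟨n0, hn0⟩ := ha_half 0
  obtain ⟨n1, hn1⟩ := ha_half 1
  obtain ⟨p, hp⟩ := hb
  obtain ⟨q, hq⟩ := hc
  obtain ⟨m, hm⟩ := hlam
  have hv : vecR a ≠ 0 := by
    intro h
    apply ha
    have := congrArg (WithLp.equiv 2 (Fin 2 → ℝ)) h
    simpa [vecR] using this
  have hvn : (0:ℝ) < ‖vecR a‖ := norm_pos_iff.mpr hv
  have hD : ((det2 b c : ℤ) : ℝ) ≠ 0 := Int.cast_ne_zero.mpr hbc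
  rw [infDist_hyperplane _ hv]
  have hinner : (inner ℝ (vecR a) α : ℝ) = a 0 * α 0 + a 1 * α 1 := by
    simp [vecR, PiLp.inner_apply, RCLike.inner_apply, Fin.sum_univ_two, mul_comm]
  have hpb : (b 0 : ℝ) * α 0 + (b 1 : ℝ) * α 1 = p := by
    simpa [vec, PiLp.inner_apply, RCLike.inner_apply, Fin.sum_univ_two, mul_comm] using hp
  have hqc : (c 0 : ℝ) * α 0 + (c 1 : ℝ) * α 1 = q := by
    simpa [vec, PiLp.inner_apply, RCLike.inner_apply, Fin.sum_univ_two, mul_comm] using hq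
  set K : ℤ := n0 * (p * c 1 - q * b 1) + n1 * (q * b 0 - p * c 0) - m * det2 b c with hK
  have key : (inner ℝ (vecR a) α : ℝ) - lam = K / (2 * det2 b c) := by
    rw [hinner, hn0, hn1, hm, hK]
    have hD2 : (2 : ℝ) * det2 b c ≠ 0 := by positivity
    field_simp
    push_cast [det2]
    linear_combination ((n0:ℝ) * c 1 - (n1:ℝ) * c 0) * hpb + ((n1:ℝ) * b 0 - (n0:ℝ) * b 1) * hqc
  refine ⟨|K|, ?_⟩
  rw [key, abs_div, Int.cast_abs]
  rw [abs_mul, abs_two]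
  rw [div_div, div_eq_mul_inv]
  congr 1
  ring
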